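/- arXiv:2005.08871 — 4 statements merged into one kernel-verified Lean document; each statement's English description precedes it below -/
import Mathlib

section
/- Let $R$ be a commutative ring containing elements $\tau, \gamma, \epsilon$ satisfying $\epsilon^2 = 1$, $\epsilon\tau = -\tau$, and $\tau^2 = 2(1-\epsilon)\gamma$. Define a sequence $(x_n)_{n \geq 0}$ by $x_0 = 2$, $x_1 = \tau$, and $x_n = \tau x_{n-1} - \gamma x_{n-2}$ for $n \geq 2$. Then for all $n \geq 1$: if $n$ is odd, $x_n = \tau\gamma^{(n-1)/2}$, and if $n$ is even, $x_n = 2(-\epsilon)^{n/2}\gamma^{n/2}$. -/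
theorem adams_of_tau (R : Type*) [CommRing R] (τ γ ε : R)
    (hε : ε ^ 2 = 1) (hετ : ε * τ = -τ) (hτ : τ ^ 2 = 2 * (1 - ε) * γ)
    (x : ℕ → R) (hx0 : x 0 = 2) (hx1 : x 1 = τ)
    (hrec : ∀ n, 2 ≤ n → x n = τ * x (n - 1) - γ * x (n - 2)) :
    ∀ n, 1 ≤ n →
      (Odd n → x n = τ * γ ^ ((n - 1) / 2)) ∧
      (Even n → x n = 2 * (-ε) ^ (n / 2) * γ ^ (n / 2)) := by
  have hτε : ∀ k, (-ε) ^ k * τ = τ := by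
    intro k
    induction k with
    | zero => simp
    | succ k ih =>
      rw [pow_succ, mul_assoc, neg_mul, hετ, neg_neg, ih]
  have h1ε : ∀ k, (1 - ε) * (-ε) ^ k = 1 - ε := by
    intro k
    induction k with
    | zero => simp
    | succ k ih =>
      rw [pow_succ, ← mul_assoc, ih, mul_neg, sub_mul, one_mul, mul_comm,
        ← pow_two, hε]
      ring
  intro n
  induction n using Nat.strong_induction_on with
  | _ n ih =>
    intro hn
    match n, hn with
    | 1, _ =>
      refine ⟨fun _ => by simpa using hx1, fun h => absurd h (by decide)⟩
    | 2, _ =>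
      have h2 := hrec 2 le_rfl
      simp only [show (2:ℕ) - 1 = 1 from rfl, show (2:ℕ) - 2 = 0 from rfl,
        hx0, hx1] at h2
      refine ⟨fun h => absurd h (by decide), fun _ => ?_⟩
      rw [h2, ← pow_two, hτ]
      ring
    | (m+3), _ =>
      constructor
      · rintro ⟨k, hk⟩
        have hk1 : 1 ≤ k := by omega
        have h1 := (ih (2*k) (by omega) (by omega)).2 ⟨k, by ring⟩
        have h2 := (ih (2*k-1) (by omega) (by omega)).1 ⟨k-1, by omega⟩
        have hr := hrec (m+3) (by omega)
        rw [show m+3-1 = 2*k by omega, show m+3-2 = 2*k-1 by omega, h1, h2] at hr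
        rw [hr, show (2*k)/2 = k by omega, show (2*k-1-1)/2 = k-1 by omega,
          show m+3 = 2*k+1 by omega, show (2*k+1-1)/2 = k by omega]
        obtain ⟨j, hj⟩ : ∃ j, k = j + 1 := ⟨k - 1, by omega⟩
        subst hj
        have : γ * (τ * γ ^ (j + 1 - 1)) = τ * γ ^ (j + 1) := by
          simp [pow_succ]; ring
        rw [this]
        have hτk : τ * (-ε) ^ (j + 1) = τ := by rw [mul_comm, hτε]
        calc τ * (2 * (-ε) ^ (j+1) * γ ^ (j+1)) - τ * γ ^ (j+1)
            = 2 * (τ * (-ε) ^ (j+1)) * γ ^ (j+1) - τ * γ ^ (j+1) := by ring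
          _ = τ * γ ^ (j+1) := by rw [hτk]; ring
      · rintro ⟨k, hk⟩
        have hk2 : 2 ≤ k := by omega
        have h1 := (ih (2*k-1) (by omega) (by omega)).1 ⟨k-1, by omega⟩
        have h2 := (ih (2*k-2) (by omega) (by omega)).2 ⟨k-1, by omega⟩
        have hr := hrec (m+3) (by omega)
        rw [show m+3-1 = 2*k-1 by omega, show m+3-2 = 2*k-2 by omega, h1, h2] at hr
        rw [hr, show (2*k-1-1)/2 = k-1 by omega, show (2*k-2)/2 = k-1 by omega,
          show m+3 = 2*k by omega, show (2*k)/2 = k by omega]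
        obtain ⟨j, hj⟩ : ∃ j, k = j + 1 := ⟨k - 1, by omega⟩
        subst hj
        simp only [Nat.add_sub_cancel]
        have hg : γ ^ (j + 1) = γ ^ j * γ := pow_succ γ j
        have he : (-ε) ^ (j + 1) = (-ε) ^ j * (-ε) := pow_succ _ j
        calc τ * (τ * γ ^ j) - γ * (2 * (-ε) ^ j * γ ^ j)
            = τ ^ 2 * γ ^ j - 2 * (-ε) ^ j * (γ ^ j * γ) := by ring
          _ = 2 * ((1-ε) * (-ε) ^ j) * γ ^ j * γ
              - 2 * (-ε) ^ j * (γ ^ j * γ) := by rw [hτ, h1ε]; ring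
          _ = 2 * ((-ε) ^ j * (-ε)) * (γ ^ j * γ) := by ring
          _ = 2 * (-ε) ^ (j + 1) * γ ^ (j + 1) := by rw [← he, ← hg]
end

section
/- Let $R$ be a commutative ring containing an element $\epsilon$ with $\epsilon^2 = 1$, and set $h = 1 - \epsilon$. Define a sequence $(x_n)_{n \geq 0}$ by $x_0 = 2$, $x_1 = h$, and $x_n = h\,x_{n-1} - x_{n-2}$ for $n \geq 2$. Then for all $n \geq 1$: if $n$ is odd, $x_n = h$, and if $n$ is even, $x_n = h + (-1)^{n/2}(1+\epsilon)$. -/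
theorem adams_of_h (R : Type*) [CommRing R] (ε : R) (hε : ε ^ 2 = 1)
    (h : R) (hh : h = 1 - ε)
    (x : ℕ → R) (hx0 : x 0 = 2) (hx1 : x 1 = h)
    (hrec : ∀ n, 2 ≤ n → x n = h * x (n - 1) - x (n - 2)) :
    ∀ n, 1 ≤ n →
      (Odd n → x n = h) ∧
      (Even n → x n = h + (-1 : R) ^ (n / 2) * (1 + ε)) := by
  have key : ∀ k, x (2 * k + 1) = h ∧ x (2 * k + 2) = h + (-1 : R) ^ (k + 1) * (1 + ε) := by
    intro k
    induction k with
    | zero =>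
      constructor
      · simpa using hx1
      · have := hrec 2 (by norm_num)
        simp only [show (2:ℕ) - 1 = 1 from rfl, show (2:ℕ) - 2 = 0 from rfl] at this
        rw [hx1, hx0] at this
        rw [this, hh]
        linear_combination hε
    | succ k ih =>
      obtain ⟨ih1, ih2⟩ := ih
      have hodd : x (2 * (k + 1) + 1) = h := by
        have := hrec (2 * k + 3) (by omega)
        have e1 : 2 * k + 3 - 1 = 2 * k + 2 := by omega
        have e2 : 2 * k + 3 - 2 = 2 * k + 1 := by omega
        rw [e1, e2, ih1, ih2] at this
        have e4 : 2 * (k + 1) + 1 = 2 * k + 3 := by omega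
        rw [e4, this, hh]
        have hz : (1 - ε) * (1 + ε) = 0 := by linear_combination -hε
        have hsq : (1 - ε) * (1 - ε) = 2 * (1 - ε) := by linear_combination hε
        calc (1 - ε) * ((1 - ε) + (-1 : R) ^ (k + 1) * (1 + ε)) - (1 - ε)
            = (1 - ε) * (1 - ε) + (-1 : R) ^ (k + 1) * ((1 - ε) * (1 + ε)) - (1 - ε) := by ring
          _ = 1 - ε := by rw [hz, hsq]; ring
      refine ⟨hodd, ?_⟩
      have := hrec (2 * k + 4) (by omega)
      have e1 : 2 * k + 4 - 1 = 2 * (k + 1) + 1 := by omega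
      have e2 : 2 * k + 4 - 2 = 2 * k + 2 := by omega
      rw [e1, e2, hodd, ih2] at this
      have e3 : 2 * (k + 1) + 2 = 2 * k + 4 := by omega
      rw [e3, this, hh]
      have hsq : (1 - ε) * (1 - ε) = 2 * (1 - ε) := by linear_combination hε
      calc (1 - ε) * (1 - ε) - ((1 - ε) + (-1 : R) ^ (k + 1) * (1 + ε))
          = (1 - ε) * (1 - ε) - (1 - ε) - (-1 : R) ^ (k + 1) * (1 + ε) := by ring
        _ = (1 - ε) + (-1 : R) ^ (k + 1 + 1) * (1 + ε) := by rw [hsq]; ring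
  intro n hn
  constructor
  · rintro ⟨k, hk⟩
    have : n = 2 * k + 1 := by omega
    rw [this]; exact (key k).1
  · rintro ⟨k, hk⟩
    have hk1 : 1 ≤ k := by omega
    have : n = 2 * (k - 1) + 2 := by omega
    rw [this]
    have := (key (k - 1)).2
    have e : k - 1 + 1 = (2 * (k - 1) + 2) / 2 := by omega
    rw [this, ← e]
end

section
/- Let $R$ be a commutative ring containing elements $\tau, \gamma, \epsilon$ satisfying $\epsilon^2 = 1$, $\epsilon\tau = -\tau$, and $\tau^2 = 2(1-\epsilon)\gamma$, and set $h = 1-\epsilon$. Define $\psi_\tau(n) = \tau\gamma^{(n-1)/2}$ for $n$ odd and $\psi_\tau(n) = 2(-\epsilon)^{n/2}\gamma^{n/2}$ for $n$ even (with $\psi_\tau(0)=2$). Define a sequence $(\omega(n))_{n\geq 0}$ by $\omega(0) = 0$, $\omega(1) = 1$, and $\omega(n) = \tau\,\omega(n-1) - \gamma\,\omega(n-2) + \psi_\tau(n-1)$ for $n \geq 2$. Then for all $n \geq 1$: if $n$ is odd, $\omega(n) = n\big(\tfrac{n-1}{2}h + (-\epsilon)^{(n-1)/2}\big)\gamma^{(n-1)/2}$,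 and if $n$ is even, $\omega(n) = \tfrac{n^2}{2}\tau\gamma^{(n-2)/2}$. -/
theorem omega_explicit (R : Type*) [CommRing R] (τ γ ε : R)
    (hε : ε ^ 2 = 1) (hετ : ε * τ = -τ) (hτ : τ ^ 2 = 2 * (1 - ε) * γ)
    (h : R) (hh : h = 1 - ε)
    (ψ : ℕ → R) (hψ0 : ψ 0 = 2)
    (hψodd : ∀ n, Odd n → ψ n = τ * γ ^ ((n - 1) / 2))
    (hψeven : ∀ n, 1 ≤ n → Even n → ψ n = 2 * (-ε) ^ (n / 2) * γ ^ (n / 2))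
    (ω : ℕ → R) (hω0 : ω 0 = 0) (hω1 : ω 1 = 1)
    (hrec : ∀ n, 2 ≤ n → ω n = τ * ω (n - 1) - γ * ω (n - 2) + ψ (n - 1)) :
    ∀ n, 1 ≤ n →
      (Odd n → ω n = (n : R) * ((((n - 1) / 2 : ℕ) : R) * h + (-ε) ^ ((n - 1) / 2))
          * γ ^ ((n - 1) / 2)) ∧
      (Even n → ω n = ((n ^ 2 / 2 : ℕ) : R) * τ * γ ^ ((n - 2) / 2)) := by
  subst hh
  have hτh : τ * (1 - ε) = 2 * τ := by
    have hτε : τ * ε = -τ := by rw [mul_comm]; exact hετ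
    linear_combination -hτε
  have heτ : ∀ k : ℕ, (-ε) ^ k * τ = τ := by
    intro k; induction k with
    | zero => simp
    | succ k ih =>
      rw [pow_succ, mul_assoc, neg_mul, hετ, neg_neg]; exact ih
  have heh : ∀ k : ℕ, (-ε) ^ k * (1 - ε) = 1 - ε := by
    intro k; induction k with
    | zero => simp
    | succ k ih =>
      rw [pow_succ, mul_assoc]
      have h1 : (-ε) * (1 - ε) = 1 - ε := by linear_combination hε
      rw [h1, ih]
  set P : ℕ → Prop := fun n =>
      (Odd n → ω n = (n : R) * ((((n - 1) / 2 : ℕ) : R) * (1 - ε) + (-ε) ^ ((n - 1) / 2))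
          * γ ^ ((n - 1) / 2)) ∧
      (Even n → ω n = ((n ^ 2 / 2 : ℕ) : R) * τ * γ ^ ((n - 2) / 2)) with hP
  have key : ∀ n, P n ∧ P (n + 1) := by
    intro n
    induction n with
    | zero =>
      constructor
      · constructor
        · intro hodd; rw [Nat.odd_iff] at hodd; omega
        · intro _; simp [hω0]
      · constructor
        · intro _; simp [hω1]
        · intro heven; rw [Nat.even_iff] at heven; omega
    | succ n ih =>
      refine ⟨ih.2, ?_⟩
      rcases Nat.even_or_odd n with he | ho
      · -- n even, n + 2 even
        obtain ⟨k, hk⟩ := he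
        subst hk
        constructor
        · intro hodd; rw [Nat.odd_iff] at hodd; omega
        · intro _
          have hrw := hrec (k + k + 2) (by omega)
          have e1 : k + k + 2 - 1 = k + k + 1 := by omega
          have e2 : k + k + 2 - 2 = k + k := by omega
          rw [e1, e2] at hrw
          have hodd1 := ih.2.1 ⟨k, by omega⟩
          have e3 : (k + k + 1 - 1) / 2 = k := by omega
          rw [e3] at hodd1
          have hψ1 := hψodd (k + k + 1) ⟨k, by omega⟩
          rw [e3] at hψ1
          have e4 : (k + k + 2 - 2) / 2 = k := by omega
          rw [e4]
          have ecoef : ((k + k + 2) ^ 2 / 2 : ℕ) = 2 * k ^ 2 + 4 * k + 2 := by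
            have : (k + k + 2) ^ 2 = 2 * (2 * k ^ 2 + 4 * k + 2) := by ring
            rw [this, Nat.mul_div_cancel_left _ (by norm_num)]
          rw [ecoef]
          rcases Nat.eq_zero_or_pos k with rfl | hkpos
          · simp only [hω0] at hrw
            rw [hrw, hodd1, hψ1]
            push_cast
            linear_combination γ ^ 0 * heτ 0
          · obtain ⟨k', rfl⟩ : ∃ k', k = k' + 1 := ⟨k - 1, by omega⟩
            have heven0 := ih.1.2 ⟨k' + 1, by omega⟩
            have e5 : (k' + 1 + (k' + 1) - 2) / 2 = k' := by omega
            have e6 : ((k' + 1 + (k' + 1)) ^ 2 / 2 : ℕ) = 2 * (k' + 1) ^ 2 := by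
              have : (k' + 1 + (k' + 1)) ^ 2 = 2 * (2 * (k' + 1) ^ 2) := by ring
              rw [this, Nat.mul_div_cancel_left _ (by norm_num)]
            rw [e5, e6] at heven0
            rw [hrw, hodd1, hψ1, heven0]
            push_cast
            linear_combination ((2 * (k' : R) + 3) * ((k' : R) + 1) * γ ^ (k' + 1)) * hτh
              + ((2 * (k' : R) + 3) * γ ^ (k' + 1)) * heτ (k' + 1)
      · -- n odd, n + 2 odd
        obtain ⟨k, hk⟩ := ho
        subst hk
        constructor
        · intro _
          have hrw := hrec (2 * k + 1 + 2) (by omega)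
          have e1 : 2 * k + 1 + 2 - 1 = 2 * k + 2 := by omega
          have e2 : 2 * k + 1 + 2 - 2 = 2 * k + 1 := by omega
          rw [e1, e2] at hrw
          have heven1 := ih.2.2 ⟨k + 1, by omega⟩
          have e3 : (2 * k + 2 - 2) / 2 = k := by omega
          have e4 : ((2 * k + 2) ^ 2 / 2 : ℕ) = 2 * k ^ 2 + 4 * k + 2 := by
            have : (2 * k + 2) ^ 2 = 2 * (2 * k ^ 2 + 4 * k + 2) := by ring
            rw [this, Nat.mul_div_cancel_left _ (by norm_num)]
          rw [e3, e4] at heven1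
          have hodd0 := ih.1.1 ⟨k, by omega⟩
          have e5 : (2 * k + 1 - 1) / 2 = k := by omega
          rw [e5] at hodd0
          have hψ2 := hψeven (2 * k + 2) (by omega) ⟨k + 1, by omega⟩
          have e6 : (2 * k + 2) / 2 = k + 1 := by omega
          rw [e6] at hψ2
          have e7 : (2 * k + 1 + 2 - 1) / 2 = k + 1 := by omega
          rw [e7]
          rw [hrw, heven1, hodd0, hψ2]
          push_cast
          linear_combination ((2 * (k : R) ^ 2 + 4 * (k : R) + 2) * γ ^ k) * hτ
            - ((2 * (k : R) + 1) * γ ^ (k + 1)) * heh k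
        · intro heven; rw [Nat.even_iff] at heven; omega
  intro n _
  exact (key n).1
end

section
/- Let $R$ be a commutative ring containing elements $\tau, \epsilon$ satisfying $\epsilon^2 = 1$, $\epsilon\tau = -\tau$, and $\tau^2 = 2(1-\epsilon)$. Then for all $v_1, v_2, v_3 \in R$, writing $\sigma(v_1) = v_1+v_2+v_3$, $\sigma(v_1v_2) = v_1v_2+v_1v_3+v_2v_3$, $\sigma(v_1^2) = v_1^2+v_2^2+v_3^2$, and $\sigma(v_1^2v_2) = \sum_{i \neq j} v_i^2 v_j$, one has: $\sum_{i<j}(v_i+\tau)^2(v_j+\tau)^2 - 2\sum_i (v_i+\tau)^2 - 3\tau\big((v_1+\tau)(v_2+\tau)(v_3+\tau)\big) + 12(1-\epsilon) = 2(1-2\epsilon)\sigma(v_1^2) + 2(1-\epsilon)\sigma(v_1v_2) + 2\tau\,\sigma(v_1^2v_2) - 3\tau\,v_1v_2v_3 + \sigma(v_1^2v_2^2)$, where $\sigma(v_1^2v_2^2) = v_1^2v_2^2 + v_1^2v_3^2 + v_2^2v_3^2$. -/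
theorem ternary_law_F2 (R : Type*) [CommRing R] (τ ε : R)
    (hε : ε ^ 2 = 1) (hετ : ε * τ = -τ) (hτ : τ ^ 2 = 2 * (1 - ε)) :
    ∀ v1 v2 v3 : R,
      ((v1 + τ) ^ 2 * (v2 + τ) ^ 2 + (v1 + τ) ^ 2 * (v3 + τ) ^ 2
          + (v2 + τ) ^ 2 * (v3 + τ) ^ 2)
        - 2 * ((v1 + τ) ^ 2 + (v2 + τ) ^ 2 + (v3 + τ) ^ 2)
        - 3 * τ * ((v1 + τ) * (v2 + τ) * (v3 + τ))
        + 12 * (1 - ε)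
      = 2 * (1 - 2 * ε) * (v1 ^ 2 + v2 ^ 2 + v3 ^ 2)
        + 2 * (1 - ε) * (v1 * v2 + v1 * v3 + v2 * v3)
        + 2 * τ * (v1 ^ 2 * v2 + v1 ^ 2 * v3 + v2 ^ 2 * v1 + v2 ^ 2 * v3
            + v3 ^ 2 * v1 + v3 ^ 2 * v2)
        - 3 * τ * (v1 * v2 * v3)
        + (v1 ^ 2 * v2 ^ 2 + v1 ^ 2 * v3 ^ 2 + v2 ^ 2 * v3 ^ 2) := by
  intro v1 v2 v3
  linear_combination
    (-6 + 2 * v3 ^ 2 + v2 * v3 + 2 * v2 ^ 2 + v1 * v3 + v1 * v2 + 2 * v1 ^ 2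
      + τ * v3 + τ * v2 + τ * v1) * hτ
    + (-2 * v3 - 2 * v2 - 2 * v1) * hετ
end
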